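/- Under the hypotheses of the previous setting (H a core-free maximal cyclic subgroup of G complementing a normal subgroup N), if K is a conjugate of H distinct from H, then H ∩ K = {1}. -/

import Mathlib

lemma aux_norm {G : Type*} [Group G] (L M : Subgroup G)
    (hL : ∀ a b : G, a ∈ L → b ∈ L → a * b = b * a) (hM : M ≤ L) :
    L ≤ Subgroup.normalizer (M : Set G) := by
  intro h hh
  rw [Subgroup.mem_normalizer_iff]
  intro x
  constructor
  · intro hx
    have : h * x * h⁻¹ = x := by
      have hc := hL h x hh (hM hx)
      rw [hc]; group
    rw [this]; exact hx
  · intro hx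
    have hc := hL h⁻¹ (h * x * h⁻¹) (L.inv_mem hh) (hM hx)
    have e : x = h⁻¹ * (h * x * h⁻¹) * h := by group
    rw [e, hc]
    simpa [mul_assoc] using hx

theorem stmt8 (G : Type*) [Group G] [Finite G] (H N : Subgroup G)
    (hcyc : IsCyclic H) (hmax : IsCoatom H) (hcore : H.normalCore = ⊥)
    [N.Normal] (hcompl : Subgroup.IsComplement' N H)
    (g : G) (K : Subgroup G) (hK : K = H.map (MulAut.conj g).toMonoidHom)
    (hne : K ≠ H) : H ⊓ K = ⊥ := by
  have hcommH : ∀ a b : G, a ∈ H → b ∈ H → a * b = b * a := by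
    intro a b ha hb
    letI : CommGroup H := hcyc.commGroup
    exact congrArg Subtype.val (mul_comm (⟨a, ha⟩ : H) ⟨b, hb⟩)
  have hcommK : ∀ a b : G, a ∈ K → b ∈ K → a * b = b * a := by
    intro a b ha hb
    rw [hK, Subgroup.mem_map] at ha hb
    obtain ⟨x, hx, rfl⟩ := ha
    obtain ⟨y, hy, rfl⟩ := hb
    rw [← map_mul, ← map_mul, hcommH x y hx hy]
  have hHn : H ≤ Subgroup.normalizer ((H ⊓ K : Subgroup G) : Set G) := aux_norm H (H ⊓ K) hcommH inf_le_left
  have hKn : K ≤ Subgroup.normalizer ((H ⊓ K : Subgroup G) : Set G) := aux_norm K (H ⊓ K) hcommK inf_le_right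
  -- K is not contained in H
  have hcard : Nat.card K = Nat.card H := by
    rw [hK]
    exact (Nat.card_congr (Subgroup.equivMapOfInjective H _
      (MulAut.conj g).injective).toEquiv).symm
  have hKH : ¬ K ≤ H := by
    intro hle
    exact hne (Subgroup.eq_of_le_of_card_ge hle hcard.ge)
  -- H ⊔ K = ⊤
  have hlt : H < H ⊔ K := lt_of_le_of_ne le_sup_left (by
    intro heq
    exact hKH (heq ▸ le_sup_right))
  have htop : H ⊔ K = ⊤ := hmax.2 _ hlt
  have hnt : Subgroup.normalizer ((H ⊓ K : Subgroup G) : Set G) = ⊤ := top_le_iff.mp (htop ▸ sup_le hHn hKn)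
  have : (H ⊓ K).Normal := Subgroup.normalizer_eq_top_iff.mp hnt
  have hle : H ⊓ K ≤ H.normalCore := Subgroup.normal_le_normalCore.mpr inf_le_left
  rw [hcore] at hle
  exact le_bot_iff.mp hle
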